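/- Let n = (n_1,…,n_m) be a tuple of nonnegative integers with N = n_1+⋯+n_m and, for a real number a, let C(n;a) = Σ_{π ∈ P(n)} a^{bl(π)}, the sum over all inhomogeneous set partitions π of [N] with respect to the boxes determined by n, where bl(π) is the number of blocks of π. Then for all j ≠ k in {1,…,m} and all real a: C_j^+(n;a) − C_k^+(n;a) = (n_k − n_j) C(n;a) + a·n_k·C_k^-(n;a) − a·n_j·C_j^-(n;a), where a term n_j C_j^-(n;a) is interpreted as 0 when n_j = 0. -/

import Mathlib

open Finset MeasureTheory
open scoped Classical

namespace Paper

/-- Sum of sizes of boxes before box `j`. -/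
def psum {m : ℕ} (n : Fin m → ℕ) (j : Fin m) : ℕ :=
  ∑ t : Fin m, if t < j then n t else 0

/-- `i` (0-indexed) lies in box `j`. -/
def inBox {m : ℕ} (n : Fin m → ℕ) (j : Fin m) (i : ℕ) : Prop :=
  psum n j ≤ i ∧ i < psum n j + n j

/-- `i` and `k` lie in a common box. -/
def sameBox {m : ℕ} (n : Fin m → ℕ) (i k : ℕ) : Prop :=
  ∃ j : Fin m, inBox n j i ∧ inBox n j k

/-- Total number of elements. -/
def total {m : ℕ} (n : Fin m → ℕ) : ℕ := ∑ t, n t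

/-- `P` is a set partition of `{0, …, N-1}`. -/
def IsPartitionOf (N : ℕ) (P : Finset (Finset ℕ)) : Prop :=
  (∀ b ∈ P, b ⊆ Finset.range N ∧ b.Nonempty) ∧
  ∀ i ∈ Finset.range N, (P.filter fun b => i ∈ b).card = 1

/-- No block of `P` contains two distinct elements of the same box. -/
def InhomBlocks {m : ℕ} (n : Fin m → ℕ) (P : Finset (Finset ℕ)) : Prop :=
  ∀ b ∈ P, ∀ i ∈ b, ∀ k ∈ b, i ≠ k → ¬ sameBox n i k

/-- The inhomogeneous perfect matchings of `[N]` w.r.t. the boxes of `n`. -/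
noncomputable def matchings {m : ℕ} (n : Fin m → ℕ) : Finset (Finset (Finset ℕ)) :=
  ((Finset.range (total n)).powerset.powerset).filter
    (fun P => IsPartitionOf (total n) P ∧ (∀ b ∈ P, b.card = 2) ∧ InhomBlocks n P)

/-- Number of inhomogeneous perfect matchings. -/
noncomputable def K {m : ℕ} (n : Fin m → ℕ) : ℕ := (matchings n).card


/-- The inhomogeneous set partitions of `[N]`: every block has at least two
elements and no block meets a box twice. -/
noncomputable def inhomPartitions {m : ℕ} (n : Fin m → ℕ) : Finset (Finset (Finset ℕ)) :=
  ((Finset.range (total n)).powerset.powerset).filter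
    (fun P => IsPartitionOf (total n) P ∧ (∀ b ∈ P, 2 ≤ b.card) ∧ InhomBlocks n P)

/-- The generating polynomial `C(n;a) = Σ_{π ∈ P(n)} a^{bl(π)}`. -/
noncomputable def charlierGF {m : ℕ} (n : Fin m → ℕ) (a : ℝ) : ℝ :=
  ∑ P ∈ inhomPartitions n, a ^ P.card

section Boxes
variable {m : ℕ}

lemma sum_ite_le (n : Fin m → ℕ) (t : Fin m) :
    (∑ s : Fin m, if s ≤ t then n s else 0) = psum n t + n t := by
  rw [psum]
  have h : ∀ s : Fin m, (if s ≤ t then n s else 0)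
      = (if s < t then n s else 0) + (if s = t then n s else 0) := by
    intro s
    rcases lt_trichotomy s t with h1 | h1 | h1
    · simp [h1, le_of_lt h1, ne_of_lt h1]
    · simp [h1]
    · simp [not_le_of_gt h1, not_lt_of_gt h1, (ne_of_lt h1).symm]
  rw [Finset.sum_congr rfl (fun s _ => h s), Finset.sum_add_distrib]
  congr 1
  simp

lemma psum_add_le_of_lt (n : Fin m → ℕ) {t t' : Fin m} (h : t < t') :
    psum n t + n t ≤ psum n t' := by
  rw [← sum_ite_le, psum]
  apply Finset.sum_le_sum
  intro s _
  split_ifs with h1 h2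
  · exact le_refl _
  · exact absurd (lt_of_le_of_lt h1 h) h2
  · exact Nat.zero_le _
  · exact le_refl _

lemma psum_add_le_total (n : Fin m → ℕ) (t : Fin m) : psum n t + n t ≤ total n := by
  rw [← sum_ite_le, total]
  apply Finset.sum_le_sum
  intro s _
  split_ifs <;> simp

lemma inBox_lt_total {n : Fin m → ℕ} {j : Fin m} {i : ℕ} (h : inBox n j i) : i < total n :=
  lt_of_lt_of_le h.2 (psum_add_le_total n j)

/-- color of an element: the index of its box. -/
def col (n : Fin m → ℕ) (i : ℕ) : ℕ := ∑ t : Fin m, if psum n t + n t ≤ i then 1 else 0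

lemma col_eq_of_inBox {n : Fin m → ℕ} {j : Fin m} {i : ℕ} (h : inBox n j i) :
    col n i = (j : ℕ) := by
  rw [col]
  have key : ∀ t : Fin m, (psum n t + n t ≤ i) ↔ t < j := by
    intro t
    constructor
    · intro ht
      by_contra hle
      push_neg at hle
      obtain ⟨ha, hb⟩ := h
      rcases eq_or_lt_of_le hle with h1 | h1
      · subst h1; omega
      · have := psum_add_le_of_lt n h1
        omega
    · intro ht
      exact le_trans (psum_add_le_of_lt n ht) h.1
  calc (∑ t : Fin m, if psum n t + n t ≤ i then 1 else 0)
      = ∑ t : Fin m, if t < j then 1 else 0 := by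
        apply Finset.sum_congr rfl; intro t _; simp [key t]
    _ = (Finset.univ.filter (fun t : Fin m => t < j)).card := by
        rw [Finset.card_filter]
    _ = (Finset.Iio j).card := by congr 1; ext t; simp
    _ = (j : ℕ) := Fin.card_Iio j

lemma psum_succ {n : Fin m → ℕ} {s s' : Fin m} (h : (s : ℕ) + 1 = (s' : ℕ)) :
    psum n s' = psum n s + n s := by
  rw [← sum_ite_le, psum]
  apply Finset.sum_congr rfl
  intro t _
  have : t < s' ↔ t ≤ s := by
    rw [Fin.lt_def, Fin.le_def]; omega
  simp [this]

lemma psum_le_or (n : Fin m → ℕ) (i : ℕ) (j : Fin m) :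
    psum n j ≤ i ∨ ∃ t, t < j ∧ i < psum n t + n t := by
  by_cases h : psum n j ≤ i
  · exact Or.inl h
  push_neg at h
  right
  set z : Fin m := ⟨0, j.pos⟩ with hzdef
  have hz0 : (z : ℕ) = 0 := rfl
  have hz : psum n z = 0 := by
    rw [psum]
    apply Finset.sum_eq_zero
    intro t _
    have : ¬ t < z := by rw [Fin.lt_def]; omega
    simp [this]
  have hzj : z < j := by
    rcases eq_or_lt_of_le (show z ≤ j by rw [Fin.le_def]; omega) with h1 | h1
    · exfalso; rw [← h1, hz] at h; omega
    · exact h1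
  set U := Finset.univ.filter (fun t : Fin m => t < j ∧ psum n t ≤ i) with hU
  have hUne : U.Nonempty := ⟨z, by simp [hU, hzj, hz]⟩
  set ts := U.max' hUne with hts
  have htsU : ts ∈ U := U.max'_mem hUne
  rw [hU, Finset.mem_filter] at htsU
  by_cases hlt : i < psum n ts + n ts
  · exact ⟨ts, htsU.2.1, hlt⟩
  push_neg at hlt
  exfalso
  have hval : (ts : ℕ) + 1 < m := by
    have h1 : (ts : ℕ) < (j : ℕ) := htsU.2.1
    have := j.isLt
    omega
  set t' : Fin m := ⟨(ts : ℕ) + 1, hval⟩ with ht'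
  have hps : psum n t' = psum n ts + n ts := psum_succ rfl
  have ht'j : t' ≤ j := by rw [Fin.le_def]; have : (ts : ℕ) < (j : ℕ) := htsU.2.1; show (ts : ℕ) + 1 ≤ (j : ℕ); omega
  rcases eq_or_lt_of_le ht'j with h1 | h1
  · rw [← h1, hps] at h; omega
  · have ht'U : t' ∈ U := by
      rw [hU, Finset.mem_filter]
      exact ⟨Finset.mem_univ _, h1, by omega⟩
    have := U.le_max' t' ht'U
    rw [← hts] at this
    have : (t' : ℕ) ≤ (ts : ℕ) := this
    simp [ht'] at this

lemma exists_inBox {n : Fin m → ℕ} {i : ℕ} (h : i < total n) : ∃ j, inBox n j i := by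
  have hm : 0 < m := by
    rcases Nat.eq_zero_or_pos m with h0 | h0
    · exfalso; subst h0; simp [total] at h
    · exact h0
  have : Nonempty (Fin m) := ⟨⟨0, hm⟩⟩
  have hne : (Finset.univ : Finset (Fin m)).Nonempty := Finset.univ_nonempty
  set tmax := (Finset.univ : Finset (Fin m)).max' hne with htm
  have htot : total n = psum n tmax + n tmax := by
    rw [← sum_ite_le, total]
    apply Finset.sum_congr rfl
    intro t _
    rw [if_pos (Finset.le_max' _ t (Finset.mem_univ t))]
  set V := Finset.univ.filter (fun t : Fin m => i < psum n t + n t) with hV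
  have hVne : V.Nonempty := ⟨tmax, by simp [hV]; omega⟩
  set j := V.min' hVne with hj
  have hjV : j ∈ V := V.min'_mem hVne
  rw [hV, Finset.mem_filter] at hjV
  rcases psum_le_or n i j with h1 | ⟨t, htj, hti⟩
  · exact ⟨j, h1, hjV.2⟩
  · exfalso
    have htV : t ∈ V := by rw [hV, Finset.mem_filter]; exact ⟨Finset.mem_univ _, hti⟩
    have := V.min'_le t htV
    rw [← hj] at this
    exact absurd (lt_of_le_of_lt this htj) (lt_irrefl _)

lemma inBox_of_col {n : Fin m → ℕ} {i : ℕ} {l : Fin m} (hi : i < total n)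
    (hc : col n i = (l : ℕ)) : inBox n l i := by
  obtain ⟨j, hj⟩ := exists_inBox hi
  have : col n i = (j : ℕ) := col_eq_of_inBox hj
  have : (j : ℕ) = (l : ℕ) := by omega
  have : j = l := Fin.val_injective this
  subst this; exact hj

lemma sameBox_iff {n : Fin m → ℕ} {i k : ℕ} (hi : i < total n) (hk : k < total n) :
    sameBox n i k ↔ col n i = col n k := by
  constructor
  · rintro ⟨j, h1, h2⟩
    rw [col_eq_of_inBox h1, col_eq_of_inBox h2]
  · intro h
    obtain ⟨j, hj⟩ := exists_inBox hi
    refine ⟨j, hj, ?_⟩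
    apply inBox_of_col hk
    rw [← h, col_eq_of_inBox hj]

lemma filter_col_eq (n : Fin m → ℕ) (l : Fin m) :
    (Finset.range (total n)).filter (fun y => col n y = (l : ℕ))
      = Finset.Ico (psum n l) (psum n l + n l) := by
  ext y
  simp only [Finset.mem_filter, Finset.mem_range, Finset.mem_Ico]
  constructor
  · rintro ⟨hy, hc⟩
    exact inBox_of_col hy hc
  · intro hy
    exact ⟨inBox_lt_total hy, col_eq_of_inBox hy⟩

lemma card_filter_col_eq (n : Fin m → ℕ) (l : Fin m) :
    ((Finset.range (total n)).filter (fun y => col n y = (l : ℕ))).card = n l := by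
  rw [filter_col_eq, Nat.card_Ico]; omega

lemma psum_update (n : Fin m → ℕ) (j : Fin m) (v : ℕ) (t : Fin m) :
    psum (Function.update n j v) t + (if j < t then n j else 0)
      = psum n t + (if j < t then v else 0) := by
  rw [psum, psum]
  rw [← Finset.add_sum_erase Finset.univ
      (fun s => if s < t then Function.update n j v s else 0) (Finset.mem_univ j),
    ← Finset.add_sum_erase Finset.univ (fun s => if s < t then n s else 0) (Finset.mem_univ j)]
  have he : (∑ s ∈ Finset.univ.erase j, if s < t then Function.update n j v s else 0)
      = ∑ s ∈ Finset.univ.erase j, if s < t then n s else 0 := by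
    apply Finset.sum_congr rfl
    intro s hs
    have : s ≠ j := (Finset.mem_erase.mp hs).1
    simp [Function.update_of_ne this]
  rw [he, Function.update_self]
  split_ifs <;> ring

lemma total_update (n : Fin m → ℕ) (j : Fin m) (v : ℕ) :
    total (Function.update n j v) + n j = total n + v := by
  rw [total, total]
  rw [← Finset.add_sum_erase Finset.univ (Function.update n j v) (Finset.mem_univ j),
    ← Finset.add_sum_erase Finset.univ n (Finset.mem_univ j)]
  have he : (∑ s ∈ Finset.univ.erase j, Function.update n j v s)
      = ∑ s ∈ Finset.univ.erase j, n s := by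
    apply Finset.sum_congr rfl
    intro s hs
    simp [Function.update_of_ne (Finset.mem_erase.mp hs).1]
  rw [he, Function.update_self]
  ring

end Boxes

section Abstract

/-- abstract partition of a finset `S` -/
def IsPartitionOn (S : Finset ℕ) (P : Finset (Finset ℕ)) : Prop :=
  (∀ b ∈ P, b ⊆ S ∧ b.Nonempty) ∧
  ∀ i ∈ S, (P.filter fun b => i ∈ b).card = 1

/-- no block contains two distinct elements of the same color -/
def Rainbow (c : ℕ → ℕ) (P : Finset (Finset ℕ)) : Prop :=
  ∀ b ∈ P, ∀ i ∈ b, ∀ k ∈ b, i ≠ k → c i ≠ c k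

noncomputable def parts (S : Finset ℕ) (c : ℕ → ℕ) : Finset (Finset (Finset ℕ)) :=
  (S.powerset.powerset).filter
    (fun P => IsPartitionOn S P ∧ (∀ b ∈ P, 2 ≤ b.card) ∧ Rainbow c P)

noncomputable def GF (S : Finset ℕ) (c : ℕ → ℕ) (a : ℝ) : ℝ :=
  ∑ P ∈ parts S c, a ^ P.card

lemma mem_parts {S : Finset ℕ} {c : ℕ → ℕ} {P : Finset (Finset ℕ)} :
    P ∈ parts S c ↔ IsPartitionOn S P ∧ (∀ b ∈ P, 2 ≤ b.card) ∧ Rainbow c P := by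
  rw [parts, Finset.mem_filter]
  constructor
  · exact fun h => h.2
  · intro h
    refine ⟨?_, h⟩
    rw [Finset.mem_powerset]
    intro b hb
    rw [Finset.mem_powerset]
    exact (h.1.1 b hb).1

/-- From the count-1 condition: existence and uniqueness of blocks. -/
lemma exists_unique_block {S : Finset ℕ} {P : Finset (Finset ℕ)}
    (hP : IsPartitionOn S P) {i : ℕ} (hi : i ∈ S) :
    ∃ b, (b ∈ P ∧ i ∈ b) ∧ ∀ b', b' ∈ P → i ∈ b' → b' = b := by
  have h := hP.2 i hi
  obtain ⟨b, hb⟩ := Finset.card_eq_one.mp h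
  have hbm : b ∈ P ∧ i ∈ b := by
    have : b ∈ P.filter fun b => i ∈ b := by rw [hb]; exact Finset.mem_singleton_self b
    exact Finset.mem_filter.mp this
  refine ⟨b, hbm, ?_⟩
  intro b' hb' hib'
  have : b' ∈ P.filter fun b => i ∈ b := Finset.mem_filter.mpr ⟨hb', hib'⟩
  rw [hb] at this
  exact Finset.mem_singleton.mp this

/-- the block of `P` containing `i` (junk if none). -/
noncomputable def blockOf (P : Finset (Finset ℕ)) (i : ℕ) : Finset ℕ :=
  if h : ∃ b ∈ P, i ∈ b then h.choose else ∅

lemma blockOf_spec {S : Finset ℕ} {P : Finset (Finset ℕ)}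
    (hP : IsPartitionOn S P) {i : ℕ} (hi : i ∈ S) :
    blockOf P i ∈ P ∧ i ∈ blockOf P i := by
  obtain ⟨b, hb, _⟩ := exists_unique_block hP hi
  have h : ∃ b ∈ P, i ∈ b := ⟨b, hb.1, hb.2⟩
  rw [blockOf, dif_pos h]
  exact h.choose_spec

lemma blockOf_eq {S : Finset ℕ} {P : Finset (Finset ℕ)}
    (hP : IsPartitionOn S P) {i : ℕ} (hi : i ∈ S) {b : Finset ℕ}
    (hb : b ∈ P) (hib : i ∈ b) : blockOf P i = b := by
  obtain ⟨b', hb', huniq⟩ := exists_unique_block hP hi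
  have h1 := blockOf_spec hP hi
  rw [huniq _ h1.1 h1.2, huniq _ hb hib]

/-- an element of `S` belongs to some block -/
lemma mem_blockOf {S : Finset ℕ} {P : Finset (Finset ℕ)}
    (hP : IsPartitionOn S P) {i : ℕ} (hi : i ∈ S) : i ∈ blockOf P i :=
  (blockOf_spec hP hi).2

/-- relabeling well-definedness -/
lemma parts_image {S : Finset ℕ} {c c' f : ℕ → ℕ}
    (hf : Set.InjOn f (S : Set ℕ)) (hc : ∀ i ∈ S, c' (f i) = c i)
    {P : Finset (Finset ℕ)} (hP : P ∈ parts S c) :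
    P.image (fun b => b.image f) ∈ parts (S.image f) c' := by
  rw [mem_parts] at hP ⊢
  obtain ⟨⟨hblocks, hcount⟩, hsize, hrain⟩ := hP
  have hblocksub : ∀ b ∈ P, ↑b ⊆ (S : Set ℕ) := by
    intro b hb
    exact_mod_cast (hblocks b hb).1
  have hmemim : ∀ (b : Finset ℕ), b ∈ P → ∀ x ∈ S, (f x ∈ b.image f ↔ x ∈ b) := by
    intro b hb x hx
    constructor
    · intro h
      obtain ⟨y, hy, hxy⟩ := Finset.mem_image.mp h
      have : y = x := hf ((hblocks b hb).1 hy) hx hxy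
      rwa [← this]
    · intro h; exact Finset.mem_image_of_mem f h
  refine ⟨⟨?_, ?_⟩, ?_, ?_⟩
  · intro b hb
    obtain ⟨b0, hb0, rfl⟩ := Finset.mem_image.mp hb
    constructor
    · exact Finset.image_subset_image (hblocks b0 hb0).1
    · exact (hblocks b0 hb0).2.image f
  · intro i hi
    obtain ⟨x, hx, rfl⟩ := Finset.mem_image.mp hi
    have key : (P.image fun b => b.image f).filter (fun b => f x ∈ b)
        = (P.filter (fun b => x ∈ b)).image (fun b => b.image f) := by
      ext b
      simp only [Finset.mem_filter, Finset.mem_image]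
      constructor
      · rintro ⟨⟨b0, hb0, rfl⟩, hmem⟩
        exact ⟨b0, ⟨hb0, (hmemim b0 hb0 x hx).mp hmem⟩, rfl⟩
      · rintro ⟨b0, ⟨hb0, hxb0⟩, rfl⟩
        exact ⟨⟨b0, hb0, rfl⟩, (hmemim b0 hb0 x hx).mpr hxb0⟩
    rw [key]
    obtain ⟨b1, hb1⟩ := Finset.card_eq_one.mp (hcount x hx)
    rw [hb1, Finset.image_singleton, Finset.card_singleton]
  · intro b hb
    obtain ⟨b0, hb0, rfl⟩ := Finset.mem_image.mp hb
    rw [Finset.card_image_of_injOn (hf.mono (hblocksub b0 hb0))]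
    exact hsize b0 hb0
  · intro b hb i hib k hkb hik
    obtain ⟨b0, hb0, rfl⟩ := Finset.mem_image.mp hb
    obtain ⟨u, hu, rfl⟩ := Finset.mem_image.mp hib
    obtain ⟨v, hv, rfl⟩ := Finset.mem_image.mp hkb
    have huv : u ≠ v := fun h => hik (by rw [h])
    have hcuv := hrain b0 hb0 u hu v hv huv
    rw [hc u ((hblocks b0 hb0).1 hu), hc v ((hblocks b0 hb0).1 hv)]
    exact hcuv

lemma image_image_id {S : Finset ℕ} {f g : ℕ → ℕ}
    (hg : ∀ x ∈ S, g (f x) = x) {P : Finset (Finset ℕ)}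
    (hblocks : ∀ b ∈ P, b ⊆ S) :
    ((P.image fun b => b.image f).image fun b => b.image g) = P := by
  rw [Finset.image_image]
  have : ∀ b ∈ P, ((fun b => Finset.image g b) ∘ fun b => Finset.image f b) b = b := by
    intro b hb
    simp only [Function.comp_apply, Finset.image_image]
    have : ∀ x ∈ b, (g ∘ f) x = x := fun x hx => hg x (hblocks b hb hx)
    rw [Finset.image_congr (fun x hx => this x hx), Finset.image_id']
  calc P.image ((fun b => Finset.image g b) ∘ fun b => Finset.image f b)
      = P.image id := Finset.image_congr (fun b hb => this b hb)
    _ = P := Finset.image_id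

/-- The generating function is invariant under color-preserving relabeling. -/
lemma GF_relabel {S : Finset ℕ} {c c' f : ℕ → ℕ}
    (hf : Set.InjOn f (S : Set ℕ)) (hc : ∀ i ∈ S, c' (f i) = c i) (a : ℝ) :
    GF (S.image f) c' a = GF S c a := by
  classical
  set g := Function.invFunOn f S with hgdef
  have hgf : ∀ x ∈ S, g (f x) = x := fun x hx => hf.leftInvOn_invFunOn hx
  have hfg : ∀ y ∈ S.image f, f (g y) = y := by
    intro y hy
    obtain ⟨x, hx, rfl⟩ := Finset.mem_image.mp hy
    rw [hgf x hx]
  have hginj : Set.InjOn g ((S.image f : Finset ℕ) : Set ℕ) := by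
    intro u hu v hv huv
    rw [← hfg u (by exact_mod_cast hu), ← hfg v (by exact_mod_cast hv), huv]
  have hgc : ∀ i ∈ S.image f, c (g i) = c' i := by
    intro i hi
    obtain ⟨x, hx, rfl⟩ := Finset.mem_image.mp hi
    rw [hgf x hx, hc x hx]
  have himg : (S.image f).image g = S := by
    ext x
    simp only [Finset.mem_image]
    constructor
    · rintro ⟨y, hy, rfl⟩
      obtain ⟨u, hu, rfl⟩ := hy
      rwa [hgf u hu]
    · intro hx
      exact ⟨f x, ⟨x, hx, rfl⟩, hgf x hx⟩
  rw [GF, GF]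
  refine Finset.sum_nbij' (fun P => P.image (fun b => b.image g))
    (fun P => P.image (fun b => b.image f)) ?_ ?_ ?_ ?_ ?_
  · intro P hP
    have := parts_image hginj hgc hP
    rwa [himg] at this
  · intro P hP
    exact parts_image hf hc hP
  · intro P hP
    have hblocks : ∀ b ∈ P, b ⊆ S.image f := by
      intro b hb
      exact ((mem_parts.mp hP).1.1 b hb).1
    exact image_image_id hfg hblocks
  · intro P hP
    have hblocks : ∀ b ∈ P, b ⊆ S := by
      intro b hb
      exact ((mem_parts.mp hP).1.1 b hb).1
    exact image_image_id hgf hblocks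
  · intro P hP
    have hblocks : ∀ b ∈ P, b ⊆ S.image f := by
      intro b hb
      exact ((mem_parts.mp hP).1.1 b hb).1
    have h1 : ((P.image fun b => b.image g).image fun b => b.image f) = P :=
      image_image_id hfg hblocks
    have hle1 : (P.image fun b => b.image g).card ≤ P.card := Finset.card_image_le
    have hle2 : P.card ≤ (P.image fun b => b.image g).card := by
      conv_lhs => rw [← h1]
      exact Finset.card_image_le
    rw [le_antisymm hle1 hle2]

end Abstract

lemma blocks_eq {T : Finset ℕ} {P : Finset (Finset ℕ)} (hP : IsPartitionOn T P)
    {b b' : Finset ℕ} (hb : b ∈ P) (hb' : b' ∈ P) {y : ℕ}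
    (hyb : y ∈ b) (hyb' : y ∈ b') : b = b' := by
  have hy : y ∈ T := (hP.1 b hb).1 hyb
  obtain ⟨b0, _, huniq⟩ := exists_unique_block hP hy
  rw [huniq b hb hyb, huniq b' hb' hyb']


lemma parts_erase_block {T : Finset ℕ} {c : ℕ → ℕ} {P : Finset (Finset ℕ)} {B : Finset ℕ}
    (hP : P ∈ parts T c) (hB : B ∈ P) : P.erase B ∈ parts (T \ B) c := by
  rw [mem_parts] at hP ⊢
  obtain ⟨⟨hblocks, hcount⟩, hsize, hrain⟩ := hP
  refine ⟨⟨?_, ?_⟩, ?_, ?_⟩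
  · intro b hb
    obtain ⟨hbB, hbP⟩ := Finset.mem_erase.mp hb
    refine ⟨?_, (hblocks b hbP).2⟩
    intro y hy
    rw [Finset.mem_sdiff]
    exact ⟨(hblocks b hbP).1 hy,
      fun hyB => hbB (blocks_eq ⟨hblocks, hcount⟩ hbP hB hy hyB)⟩
  · intro i hi
    rw [Finset.mem_sdiff] at hi
    rw [Finset.filter_erase (p := fun b => i ∈ b) B P]
    obtain ⟨bi, hbi⟩ := Finset.card_eq_one.mp (hcount i hi.1)
    rw [hbi]
    have hBbi : B ∉ ({bi} : Finset (Finset ℕ)) := by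
      rw [Finset.mem_singleton]
      rintro rfl
      have : B ∈ P.filter fun b => i ∈ b := by rw [hbi]; exact Finset.mem_singleton_self B
      exact hi.2 (Finset.mem_filter.mp this).2
    rw [Finset.erase_eq_self.mpr hBbi, Finset.card_singleton]
  · intro b hb
    exact hsize b (Finset.mem_erase.mp hb).2
  · intro b hb
    exact hrain b (Finset.mem_erase.mp hb).2

lemma parts_insert_block {T : Finset ℕ} {c : ℕ → ℕ} {ρ : Finset (Finset ℕ)} {B : Finset ℕ}
    (hρ : ρ ∈ parts T c) (hdisj : ∀ y ∈ B, y ∉ T)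
    (hrainB : ∀ i ∈ B, ∀ k ∈ B, i ≠ k → c i ≠ c k)
    (hcard : 2 ≤ B.card) : insert B ρ ∈ parts (B ∪ T) c ∧ B ∉ ρ := by
  rw [mem_parts] at hρ
  obtain ⟨⟨hblocks, hcount⟩, hsize, hrain⟩ := hρ
  have hBne : B.Nonempty := Finset.card_pos.mp (by omega)
  have hBρ : B ∉ ρ := fun h => hdisj _ hBne.choose_spec ((hblocks B h).1 hBne.choose_spec)
  refine ⟨mem_parts.mpr ⟨⟨?_, ?_⟩, ?_, ?_⟩, hBρ⟩
  · intro b hb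
    rcases Finset.mem_insert.mp hb with rfl | hb
    · exact ⟨Finset.subset_union_left, hBne⟩
    · exact ⟨((hblocks b hb).1).trans Finset.subset_union_right, (hblocks b hb).2⟩
  · intro i hi
    rw [Finset.filter_insert]
    rcases Finset.mem_union.mp hi with hiB | hiT
    · rw [if_pos hiB]
      have hempty : ρ.filter (fun b => i ∈ b) = ∅ := by
        apply Finset.filter_eq_empty_iff.mpr
        intro b hb hib
        exact hdisj i hiB ((hblocks b hb).1 hib)
      rw [hempty]
      simp
    · have hiB : i ∉ B := fun h => hdisj i h hiT
      rw [if_neg hiB]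
      exact hcount i hiT
  · intro b hb
    rcases Finset.mem_insert.mp hb with rfl | hb
    · exact hcard
    · exact hsize b hb
  · intro b hb
    rcases Finset.mem_insert.mp hb with rfl | hb
    · exact hrainB
    · exact hrain b hb

lemma card_meet {S : Finset ℕ} {c : ℕ → ℕ} {P : Finset (Finset ℕ)}
    (hP : P ∈ parts S c) (γ : ℕ) :
    (P.filter fun b => ∃ y ∈ b, c y = γ).card = (S.filter fun y => c y = γ).card := by
  obtain ⟨hpart, hsize, hrain⟩ := mem_parts.mp hP
  symm
  apply Finset.card_bij (fun y _ => blockOf P y)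
  · intro y hy
    obtain ⟨hyS, hcy⟩ := Finset.mem_filter.mp hy
    exact Finset.mem_filter.mpr
      ⟨(blockOf_spec hpart hyS).1, ⟨y, (blockOf_spec hpart hyS).2, hcy⟩⟩
  · intro y1 h1 y2 h2 heq
    obtain ⟨h1S, h1c⟩ := Finset.mem_filter.mp h1
    obtain ⟨h2S, h2c⟩ := Finset.mem_filter.mp h2
    by_contra hne
    have hb1 := blockOf_spec hpart h1S
    have hb2 := blockOf_spec hpart h2S
    have h2' : y2 ∈ blockOf P y1 := heq ▸ hb2.2
    exact hrain _ hb1.1 y1 hb1.2 y2 h2' hne (h1c.trans h2c.symm)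
  · intro b hb
    obtain ⟨hbP, y, hyb, hcy⟩ := Finset.mem_filter.mp hb
    have hyS : y ∈ S := (hpart.1 b hbP).1 hyb
    exact ⟨y, Finset.mem_filter.mpr ⟨hyS, hcy⟩, blockOf_eq hpart hyS hbP hyb⟩

lemma card_avoid {S : Finset ℕ} {c : ℕ → ℕ} {P : Finset (Finset ℕ)}
    (hP : P ∈ parts S c) (γ : ℕ) :
    ((P.filter fun b => ∀ y ∈ b, c y ≠ γ).card : ℝ)
      = (P.card : ℝ) - ((S.filter fun y => c y = γ).card : ℝ) := by
  have h1 : (P.filter fun b => ∀ y ∈ b, c y ≠ γ)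
      = P \ (P.filter fun b => ∃ y ∈ b, c y = γ) := by
    rw [← Finset.filter_not]
    apply Finset.filter_congr
    intro b _
    simp [not_exists]
  rw [h1, Finset.card_sdiff_of_subset (Finset.filter_subset _ _),
    Nat.cast_sub (Finset.card_le_card (Finset.filter_subset _ _)), card_meet hP γ]


lemma big_fwd {S : Finset ℕ} {c : ℕ → ℕ} {x : ℕ} (hx : x ∉ S)
    {P : Finset (Finset ℕ)} {b : Finset ℕ} (hP : P ∈ parts S c) (hbP : b ∈ P)
    (havoid : ∀ y ∈ b, c y ≠ c x) :
    insert (insert x b) (P.erase b) ∈ parts (insert x S) c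
      ∧ blockOf (insert (insert x b) (P.erase b)) x = insert x b
      ∧ insert x b ∉ P.erase b
      ∧ (insert x b).card = b.card + 1 := by
  have hpart := (mem_parts.mp hP).1
  have hsize := (mem_parts.mp hP).2.1
  have hrain := (mem_parts.mp hP).2.2
  have hbS : b ⊆ S := (hpart.1 b hbP).1
  have hxb : x ∉ b := fun h => hx (hbS h)
  have hcardxb : (insert x b).card = b.card + 1 := Finset.card_insert_of_notMem hxb
  have hρ : P.erase b ∈ parts (S \ b) c := parts_erase_block hP hbP
  have hdisj : ∀ y ∈ insert x b, y ∉ S \ b := by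
    intro y hy hyT
    rw [Finset.mem_sdiff] at hyT
    rcases Finset.mem_insert.mp hy with rfl | hyb
    · exact hx hyT.1
    · exact hyT.2 hyb
  have hrb : ∀ i ∈ insert x b, ∀ k ∈ insert x b, i ≠ k → c i ≠ c k := by
    intro i hi k hk hik
    rcases Finset.mem_insert.mp hi with rfl | hib <;>
      rcases Finset.mem_insert.mp hk with rfl | hkb
    · exact absurd rfl hik
    · exact (havoid k hkb).symm
    · exact havoid i hib
    · exact hrain b hbP i hib k hkb hik
  have hb2 : 2 ≤ b.card := hsize b hbP
  have hkey := parts_insert_block hρ hdisj hrb (by omega)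
  have hset : (insert x b) ∪ (S \ b) = insert x S := by
    ext z
    simp only [Finset.mem_union, Finset.mem_insert, Finset.mem_sdiff]
    constructor
    · rintro ((rfl | hzb) | ⟨hzS, _⟩)
      · exact Or.inl rfl
      · exact Or.inr (hbS hzb)
      · exact Or.inr hzS
    · rintro (rfl | hzS)
      · exact Or.inl (Or.inl rfl)
      · by_cases hzb : z ∈ b
        · exact Or.inl (Or.inr hzb)
        · exact Or.inr ⟨hzS, hzb⟩
  rw [hset] at hkey
  have hpart' := (mem_parts.mp hkey.1).1
  have hBeq : blockOf (insert (insert x b) (P.erase b)) x = insert x b :=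
    blockOf_eq hpart' (Finset.mem_insert_self x S) (Finset.mem_insert_self _ _)
      (Finset.mem_insert_self x b)
  exact ⟨hkey.1, hBeq, hkey.2, hcardxb⟩

lemma big_bwd {S : Finset ℕ} {c : ℕ → ℕ} {x : ℕ} (hx : x ∉ S)
    {P' : Finset (Finset ℕ)} (hP' : P' ∈ parts (insert x S) c)
    (hns : (blockOf P' x).card ≠ 2) :
    blockOf P' x ∈ P' ∧ x ∈ blockOf P' x
      ∧ insert ((blockOf P' x).erase x) (P'.erase (blockOf P' x)) ∈ parts S c
      ∧ (blockOf P' x).erase x ∉ P'.erase (blockOf P' x)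
      ∧ (∀ y ∈ (blockOf P' x).erase x, c y ≠ c x)
      ∧ 2 ≤ ((blockOf P' x).erase x).card := by
  have hxS : x ∈ insert x S := Finset.mem_insert_self x S
  have hpart := (mem_parts.mp hP').1
  have hsize := (mem_parts.mp hP').2.1
  have hrain := (mem_parts.mp hP').2.2
  obtain ⟨hBP, hxB⟩ := blockOf_spec hpart hxS
  set B := blockOf P' x with hBdef
  have hB2 : 2 ≤ B.card := hsize B hBP
  have hB3 : 3 ≤ B.card := by omega
  have hbcard : 2 ≤ (B.erase x).card := by
    rw [Finset.card_erase_of_mem hxB]; omega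
  have hρ : P'.erase B ∈ parts ((insert x S) \ B) c := parts_erase_block hP' hBP
  have hdisj : ∀ y ∈ B.erase x, y ∉ (insert x S) \ B := by
    intro y hy hyT
    exact (Finset.mem_sdiff.mp hyT).2 (Finset.mem_of_mem_erase hy)
  have hrb : ∀ i ∈ B.erase x, ∀ k ∈ B.erase x, i ≠ k → c i ≠ c k := by
    intro i hi k hk hik
    exact hrain B hBP i (Finset.mem_of_mem_erase hi) k (Finset.mem_of_mem_erase hk) hik
  have hkey := parts_insert_block hρ hdisj hrb hbcard
  have hset : (B.erase x) ∪ ((insert x S) \ B) = S := by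
    ext z
    simp only [Finset.mem_union, Finset.mem_erase, Finset.mem_sdiff, Finset.mem_insert]
    constructor
    · rintro (⟨hzx, hzB⟩ | ⟨hz1, hz2⟩)
      · rcases Finset.mem_insert.mp ((hpart.1 B hBP).1 hzB) with rfl | h
        · exact absurd rfl hzx
        · exact h
      · rcases hz1 with rfl | hz
        · exact absurd hxB hz2
        · exact hz
    · intro hzS
      by_cases hzB : z ∈ B
      · exact Or.inl ⟨fun h => hx (h ▸ hzS), hzB⟩
      · exact Or.inr ⟨Or.inr hzS, hzB⟩
  rw [hset] at hkey
  have havoid : ∀ y ∈ B.erase x, c y ≠ c x := by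
    intro y hy
    exact hrain B hBP y (Finset.mem_of_mem_erase hy) x hxB (Finset.mem_erase.mp hy).1
  exact ⟨hBP, hxB, hkey.1, hkey.2, havoid, hbcard⟩

lemma GF_insert_big {S : Finset ℕ} {c : ℕ → ℕ} {x : ℕ} (hx : x ∉ S) (a : ℝ) :
    ∑ P ∈ (parts (insert x S) c).filter (fun P => ¬ (blockOf P x).card = 2), a ^ P.card
      = ∑ P ∈ parts S c,
          ((P.card : ℝ) - ((S.filter fun y => c y = c x).card : ℝ)) * a ^ P.card := by
  have hxS : x ∈ insert x S := Finset.mem_insert_self x S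
  have hrhs : (∑ P ∈ parts S c,
        ((P.card : ℝ) - ((S.filter fun y => c y = c x).card : ℝ)) * a ^ P.card)
      = ∑ q ∈ (parts S c).sigma (fun P => P.filter fun b => ∀ y ∈ b, c y ≠ c x),
          a ^ q.1.card := by
    rw [Finset.sum_sigma]
    apply Finset.sum_congr rfl
    intro P hP
    dsimp only
    rw [Finset.sum_const, nsmul_eq_mul, ← card_avoid hP (c x)]
  rw [hrhs]
  refine Finset.sum_nbij'
    (fun P' => (⟨insert ((blockOf P' x).erase x) (P'.erase (blockOf P' x)),
        (blockOf P' x).erase x⟩ : Σ _ : Finset (Finset ℕ), Finset ℕ))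
    (fun q => insert (insert x q.2) (q.1.erase q.2)) ?_ ?_ ?_ ?_ ?_
  · intro P' hP'mem
    obtain ⟨hP', hns⟩ := Finset.mem_filter.mp hP'mem
    obtain ⟨hBP, hxB, hparts, hnotmem, havoid, hbcard⟩ := big_bwd hx hP' hns
    rw [Finset.mem_sigma]
    exact ⟨hparts, Finset.mem_filter.mpr ⟨Finset.mem_insert_self _ _, havoid⟩⟩
  · rintro ⟨P, b⟩ hq
    rw [Finset.mem_sigma] at hq
    obtain ⟨hP, hbmem⟩ := hq
    obtain ⟨hbP, havoid⟩ := Finset.mem_filter.mp hbmem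
    obtain ⟨hparts, hBeq, _, hcard⟩ := big_fwd hx hP hbP havoid
    rw [Finset.mem_filter]
    refine ⟨hparts, ?_⟩
    show ¬ (blockOf (insert (insert x b) (P.erase b)) x).card = 2
    rw [hBeq, hcard]
    have := (mem_parts.mp hP).2.1 b hbP
    dsimp only
    omega
  · intro P' hP'mem
    obtain ⟨hP', hns⟩ := Finset.mem_filter.mp hP'mem
    obtain ⟨hBP, hxB, hparts, hnotmem, havoid, hbcard⟩ := big_bwd hx hP' hns
    show insert (insert x ((blockOf P' x).erase x))
        ((insert ((blockOf P' x).erase x) (P'.erase (blockOf P' x))).erase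
          ((blockOf P' x).erase x)) = P'
    rw [Finset.erase_insert hnotmem, Finset.insert_erase hxB, Finset.insert_erase hBP]
  · rintro ⟨P, b⟩ hq
    rw [Finset.mem_sigma] at hq
    obtain ⟨hP, hbmem⟩ := hq
    obtain ⟨hbP, havoid⟩ := Finset.mem_filter.mp hbmem
    obtain ⟨hparts, hBeq, hnotmem, hcard⟩ := big_fwd hx hP hbP havoid
    have hxb : x ∉ b := fun h => hx ((((mem_parts.mp hP).1).1 b hbP).1 h)
    show (⟨insert ((blockOf (insert (insert x b) (P.erase b)) x).erase x)
        ((insert (insert x b) (P.erase b)).erase (blockOf (insert (insert x b) (P.erase b)) x)),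
        (blockOf (insert (insert x b) (P.erase b)) x).erase x⟩
          : Σ _ : Finset (Finset ℕ), Finset ℕ) = ⟨P, b⟩
    rw [hBeq, Finset.erase_insert hxb, Finset.erase_insert hnotmem, Finset.insert_erase hbP]
  · intro P' hP'mem
    obtain ⟨hP', hns⟩ := Finset.mem_filter.mp hP'mem
    obtain ⟨hBP, hxB, hparts, hnotmem, havoid, hbcard⟩ := big_bwd hx hP' hns
    show a ^ P'.card
        = a ^ (insert ((blockOf P' x).erase x) (P'.erase (blockOf P' x))).card
    rw [Finset.card_insert_of_notMem hnotmem, Finset.card_erase_of_mem hBP]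
    congr 1
    have : 1 ≤ P'.card := Finset.card_pos.mpr ⟨_, hBP⟩
    omega

lemma small_fwd {S : Finset ℕ} {c : ℕ → ℕ} {x : ℕ} (hx : x ∉ S)
    {y : ℕ} {ρ : Finset (Finset ℕ)} (hyS : y ∈ S) (hcy : c y ≠ c x)
    (hρ : ρ ∈ parts (S.erase y) c) :
    insert {x, y} ρ ∈ parts (insert x S) c
      ∧ blockOf (insert {x, y} ρ) x = {x, y}
      ∧ ({x, y} : Finset ℕ) ∉ ρ := by
  have hxy : x ≠ y := fun h => hx (h ▸ hyS)
  have hcardB : ({x, y} : Finset ℕ).card = 2 := Finset.card_pair hxy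
  have hdisj : ∀ z ∈ ({x, y} : Finset ℕ), z ∉ S.erase y := by
    intro z hz hzT
    rcases Finset.mem_insert.mp hz with rfl | hz1
    · exact hx (Finset.mem_of_mem_erase hzT)
    · rw [Finset.mem_singleton] at hz1
      subst hz1
      exact (Finset.mem_erase.mp hzT).1 rfl
  have hrb : ∀ i ∈ ({x, y} : Finset ℕ), ∀ k ∈ ({x, y} : Finset ℕ), i ≠ k → c i ≠ c k := by
    intro i hi k hk hik
    rcases Finset.mem_insert.mp hi with rfl | hi1 <;>
      rcases Finset.mem_insert.mp hk with rfl | hk1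
    · exact absurd rfl hik
    · rw [Finset.mem_singleton] at hk1; subst hk1; exact hcy.symm
    · rw [Finset.mem_singleton] at hi1; subst hi1; exact hcy
    · rw [Finset.mem_singleton] at hi1 hk1; subst hi1; subst hk1; exact absurd rfl hik
  have hkey := parts_insert_block hρ hdisj hrb (by omega)
  have hset : ({x, y} : Finset ℕ) ∪ S.erase y = insert x S := by
    ext z
    simp only [Finset.mem_union, Finset.mem_insert, Finset.mem_singleton, Finset.mem_erase]
    constructor
    · rintro ((rfl | rfl) | ⟨_, hz⟩)
      · exact Or.inl rfl
      · exact Or.inr hyS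
      · exact Or.inr hz
    · rintro (rfl | hzS)
      · exact Or.inl (Or.inl rfl)
      · by_cases hzy : z = y
        · exact Or.inl (Or.inr hzy)
        · exact Or.inr ⟨hzy, hzS⟩
  rw [hset] at hkey
  have hpart' := (mem_parts.mp hkey.1).1
  have hBeq : blockOf (insert {x, y} ρ) x = {x, y} :=
    blockOf_eq hpart' (Finset.mem_insert_self x S) (Finset.mem_insert_self _ _)
      (Finset.mem_insert_self x {y})
  exact ⟨hkey.1, hBeq, hkey.2⟩

lemma small_bwd {S : Finset ℕ} {c : ℕ → ℕ} {x : ℕ} (hx : x ∉ S)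
    {P' : Finset (Finset ℕ)} (hP' : P' ∈ parts (insert x S) c)
    (hs : (blockOf P' x).card = 2) :
    ∃ y, y ∈ S ∧ c y ≠ c x ∧ (blockOf P' x).erase x = {y}
      ∧ blockOf P' x = {x, y} ∧ blockOf P' x ∈ P'
      ∧ P'.erase (blockOf P' x) ∈ parts (S.erase y) c := by
  have hxS : x ∈ insert x S := Finset.mem_insert_self x S
  have hpart := (mem_parts.mp hP').1
  have hrain := (mem_parts.mp hP').2.2
  obtain ⟨hBP, hxB⟩ := blockOf_spec hpart hxS
  set B := blockOf P' x with hBdef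
  have h1 : (B.erase x).card = 1 := by rw [Finset.card_erase_of_mem hxB, hs]
  obtain ⟨y, hy⟩ := Finset.card_eq_one.mp h1
  have hyB : y ∈ B := by
    have : y ∈ B.erase x := by rw [hy]; exact Finset.mem_singleton_self y
    exact Finset.mem_of_mem_erase this
  have hyx : y ≠ x := by
    have : y ∈ B.erase x := by rw [hy]; exact Finset.mem_singleton_self y
    exact (Finset.mem_erase.mp this).1
  have hBxy : B = {x, y} := by
    have := Finset.insert_erase hxB
    rw [hy] at this
    exact this.symm
  have hyS : y ∈ S := by
    rcases Finset.mem_insert.mp ((hpart.1 B hBP).1 hyB) with h | h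
    · exact absurd h hyx
    · exact h
  have hcy : c y ≠ c x := hrain B hBP y hyB x hxB hyx
  have hρ : P'.erase B ∈ parts ((insert x S) \ B) c := parts_erase_block hP' hBP
  have hset : (insert x S) \ B = S.erase y := by
    rw [hBxy]
    ext z
    simp only [Finset.mem_sdiff, Finset.mem_insert, Finset.mem_singleton, Finset.mem_erase]
    constructor
    · rintro ⟨rfl | hzS, hz2⟩
      · exact absurd (Or.inl rfl) hz2
      · push_neg at hz2
        exact ⟨hz2.2, hzS⟩
    · rintro ⟨hzy, hzS⟩
      refine ⟨Or.inr hzS, ?_⟩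
      push_neg
      exact ⟨fun h => hx (h ▸ hzS), hzy⟩
  rw [hset] at hρ
  exact ⟨y, hyS, hcy, hy, hBxy, hBP, hρ⟩

lemma GF_insert_small {S : Finset ℕ} {c : ℕ → ℕ} {x : ℕ} (hx : x ∉ S) (a : ℝ) :
    ∑ P ∈ (parts (insert x S) c).filter (fun P => (blockOf P x).card = 2), a ^ P.card
      = a * ∑ y ∈ S.filter (fun y => c y ≠ c x), GF (S.erase y) c a := by
  have hrhs : a * ∑ y ∈ S.filter (fun y => c y ≠ c x), GF (S.erase y) c a
      = ∑ q ∈ (S.filter (fun y => c y ≠ c x)).sigma (fun y => parts (S.erase y) c),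
          a ^ (q.2.card + 1) := by
    rw [Finset.mul_sum, Finset.sum_sigma]
    apply Finset.sum_congr rfl
    intro y _
    rw [GF, Finset.mul_sum]
    apply Finset.sum_congr rfl
    intro ρ _
    rw [pow_succ]
    ring
  rw [hrhs]
  refine Finset.sum_nbij'
    (fun P' => (⟨((blockOf P' x).erase x).sum (fun z => z), P'.erase (blockOf P' x)⟩
      : Σ _ : ℕ, Finset (Finset ℕ)))
    (fun q => insert {x, q.1} q.2) ?_ ?_ ?_ ?_ ?_
  · intro P' hP'mem
    obtain ⟨hP', hs⟩ := Finset.mem_filter.mp hP'mem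
    obtain ⟨y, hyS, hcy, herase, hBxy, hBP, hρ⟩ := small_bwd hx hP' hs
    rw [Finset.mem_sigma]
    constructor
    · show ((blockOf P' x).erase x).sum (fun z => z) ∈ S.filter (fun y => c y ≠ c x)
      rw [herase, Finset.sum_singleton]
      exact Finset.mem_filter.mpr ⟨hyS, hcy⟩
    · show P'.erase (blockOf P' x) ∈ parts (S.erase (((blockOf P' x).erase x).sum (fun z => z))) c
      rw [herase, Finset.sum_singleton]
      exact hρ
  · rintro ⟨y, ρ⟩ hq
    rw [Finset.mem_sigma] at hq
    obtain ⟨hy, hρ⟩ := hq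
    obtain ⟨hyS, hcy⟩ := Finset.mem_filter.mp hy
    obtain ⟨hparts, hBeq, _⟩ := small_fwd hx hyS hcy hρ
    rw [Finset.mem_filter]
    refine ⟨hparts, ?_⟩
    rw [hBeq]
    exact Finset.card_pair (fun h => hx (h ▸ hyS))
  · intro P' hP'mem
    obtain ⟨hP', hs⟩ := Finset.mem_filter.mp hP'mem
    obtain ⟨y, hyS, hcy, herase, hBxy, hBP, hρ⟩ := small_bwd hx hP' hs
    show insert {x, ((blockOf P' x).erase x).sum (fun z => z)} (P'.erase (blockOf P' x)) = P'
    rw [herase, Finset.sum_singleton, ← hBxy, Finset.insert_erase hBP]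
  · rintro ⟨y, ρ⟩ hq
    rw [Finset.mem_sigma] at hq
    obtain ⟨hy, hρ⟩ := hq
    obtain ⟨hyS, hcy⟩ := Finset.mem_filter.mp hy
    obtain ⟨hparts, hBeq, hnotmem⟩ := small_fwd hx hyS hcy hρ
    have hxy : x ≠ y := fun h => hx (h ▸ hyS)
    show (⟨((blockOf (insert {x, y} ρ) x).erase x).sum (fun z => z),
        (insert {x, y} ρ).erase (blockOf (insert {x, y} ρ) x)⟩ : Σ _ : ℕ, Finset (Finset ℕ))
        = ⟨y, ρ⟩
    rw [hBeq]
    have h1 : ({x, y} : Finset ℕ).erase x = {y} := by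
      apply Finset.erase_insert
      rw [Finset.mem_singleton]
      exact hxy
    rw [h1, Finset.sum_singleton, Finset.erase_insert hnotmem]
  · intro P' hP'mem
    obtain ⟨hP', hs⟩ := Finset.mem_filter.mp hP'mem
    obtain ⟨y, hyS, hcy, herase, hBxy, hBP, hρ⟩ := small_bwd hx hP' hs
    show a ^ P'.card = a ^ ((P'.erase (blockOf P' x)).card + 1)
    rw [Finset.card_erase_of_mem hBP]
    congr 1
    have : 1 ≤ P'.card := Finset.card_pos.mpr ⟨_, hBP⟩
    omega

theorem GF_insert {S : Finset ℕ} {c : ℕ → ℕ} {x : ℕ} (hx : x ∉ S) (a : ℝ) :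
    GF (insert x S) c a
      = (∑ P ∈ parts S c,
          ((P.card : ℝ) - ((S.filter fun y => c y = c x).card : ℝ)) * a ^ P.card)
        + a * ∑ y ∈ S.filter (fun y => c y ≠ c x), GF (S.erase y) c a := by
  rw [GF, ← Finset.sum_filter_add_sum_filter_not (parts (insert x S) c)
    (fun P => (blockOf P x).card = 2), GF_insert_small hx a, GF_insert_big hx a]
  ring



section Bridges
variable {m : ℕ}

lemma parts_congr {S : Finset ℕ} {c c' : ℕ → ℕ} (h : ∀ i ∈ S, c' i = c i) :
    parts S c' = parts S c := by
  rw [parts, parts]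
  apply Finset.filter_congr
  intro P hP
  rw [Finset.mem_powerset] at hP
  have hsub : ∀ b ∈ P, b ⊆ S := by
    intro b hb
    have := hP hb
    rwa [Finset.mem_powerset] at this
  have hrw : Rainbow c' P ↔ Rainbow c P := by
    constructor <;> intro hr b hb i hib k hkb hik <;>
      have := hr b hb i hib k hkb hik
    · rwa [h i (hsub b hb hib), h k (hsub b hb hkb)] at this
    · rwa [h i (hsub b hb hib), h k (hsub b hb hkb)]
  rw [hrw]

lemma inhomPartitions_eq (n : Fin m → ℕ) :
    inhomPartitions n = parts (Finset.range (total n)) (col n) := by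
  rw [inhomPartitions, parts]
  apply Finset.filter_congr
  intro P _
  constructor
  · rintro ⟨hpart, hsz, hinh⟩
    refine ⟨hpart, hsz, ?_⟩
    intro b hb i hib k hkb hik
    have hi : i < total n := Finset.mem_range.mp ((hpart.1 b hb).1 hib)
    have hk : k < total n := Finset.mem_range.mp ((hpart.1 b hb).1 hkb)
    intro hcol
    exact hinh b hb i hib k hkb hik ((sameBox_iff hi hk).mpr hcol)
  · rintro ⟨hpart, hsz, hrainP⟩
    refine ⟨hpart, hsz, ?_⟩
    intro b hb i hib k hkb hik hsame
    have hi : i < total n := Finset.mem_range.mp ((hpart.1 b hb).1 hib)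
    have hk : k < total n := Finset.mem_range.mp ((hpart.1 b hb).1 hkb)
    exact hrainP b hb i hib k hkb hik ((sameBox_iff hi hk).mp hsame)

lemma charlier_eq_GF (n : Fin m → ℕ) (a : ℝ) :
    charlierGF n a = GF (Finset.range (total n)) (col n) a := by
  rw [charlierGF, GF, inhomPartitions_eq]

lemma GF_congr {S : Finset ℕ} {c c' : ℕ → ℕ} (h : ∀ i ∈ S, c' i = c i) (a : ℝ) :
    GF S c' a = GF S c a := by
  have := GF_relabel (S := S) (f := id) (c := c) (c' := c') (Set.injOn_id _) h a
  rwa [Finset.image_id] at this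

set_option maxHeartbeats 1000000 in
lemma charlier_plus (n : Fin m → ℕ) (j : Fin m) (a : ℝ) :
    charlierGF (Function.update n j (n j + 1)) a
      = GF (insert (total n) (Finset.range (total n)))
          (fun i => if i = total n then (j : ℕ) else col n i) a := by
  set N := total n with hN
  set n' := Function.update n j (n j + 1) with hn'
  have htotu := total_update n j (n j + 1)
  rw [← hn'] at htotu
  have htot : total n' = N + 1 := by omega
  rw [charlier_eq_GF, htot]
  set p := psum n j + n j with hp
  have hpN : p ≤ N := psum_add_le_total n j
  set f : ℕ → ℕ := fun i => if i = N then p else if i < p then i else i + 1 with hf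
  have hval : ∀ w ∈ insert N (Finset.range N),
      (w = N ∧ f w = p) ∨ (w ≠ N ∧ w < p ∧ f w = w)
        ∨ (w ≠ N ∧ p ≤ w ∧ w < N ∧ f w = w + 1) := by
    intro w hw
    rcases Finset.mem_insert.mp hw with rfl | hw
    · exact Or.inl ⟨rfl, by rw [hf]; simp⟩
    · rw [Finset.mem_range] at hw
      have hwN : w ≠ N := by omega
      by_cases hwp : w < p
      · exact Or.inr (Or.inl ⟨hwN, hwp, by rw [hf]; simp [hwN, hwp]⟩)
      · exact Or.inr (Or.inr ⟨hwN, by omega, hw, by rw [hf]; simp [hwN, hwp]⟩)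
  have hinj : Set.InjOn f ((insert N (Finset.range N) : Finset ℕ) : Set ℕ) := by
    intro u hu v hv huv
    have hu' := hval u (by exact_mod_cast hu)
    have hv' := hval v (by exact_mod_cast hv)
    rcases hu' with ⟨hu1, hu2⟩ | ⟨hu1, hu2, hu3⟩ | ⟨hu1, hu2, hu3, hu4⟩ <;>
      rcases hv' with ⟨hv1, hv2⟩ | ⟨hv1, hv2, hv3⟩ | ⟨hv1, hv2, hv3, hv4⟩ <;>
      omega
  have himg : (insert N (Finset.range N)).image f = Finset.range (N + 1) := by
    ext z
    simp only [Finset.mem_image, Finset.mem_range]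
    constructor
    · rintro ⟨i, hi, rfl⟩
      rcases hval i hi with ⟨_, h2⟩ | ⟨_, h2, h3⟩ | ⟨_, h2, h3, h4⟩ <;> omega
    · intro hz
      rcases lt_trichotomy z p with h | h | h
      · refine ⟨z, Finset.mem_insert_of_mem (Finset.mem_range.mpr (by omega)), ?_⟩
        rcases hval z (Finset.mem_insert_of_mem (Finset.mem_range.mpr (by omega)))
          with ⟨h1, _⟩ | ⟨_, _, h3⟩ | ⟨_, h2, _, _⟩ <;> omega
      · refine ⟨N, Finset.mem_insert_self _ _, ?_⟩
        have hh : f N = p := by rw [hf]; simp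
        omega
      · refine ⟨z - 1, Finset.mem_insert_of_mem (Finset.mem_range.mpr (by omega)), ?_⟩
        rcases hval (z - 1) (Finset.mem_insert_of_mem (Finset.mem_range.mpr (by omega)))
          with ⟨h1, _⟩ | ⟨_, h2, _⟩ | ⟨_, _, _, h4⟩ <;> omega
  have hpsum' : ∀ t, psum n' t = psum n t + (if j < t then 1 else 0) := by
    intro t
    have := psum_update n j (n j + 1) t
    rw [← hn'] at this
    by_cases h : j < t <;> simp only [h, if_true, if_false] at this ⊢ <;> omega
  have hcol : ∀ i ∈ insert N (Finset.range N),
      col n' (f i) = (fun i => if i = N then (j : ℕ) else col n i) i := by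
    intro i hi
    show col n' (f i) = if i = N then (j : ℕ) else col n i
    rcases Finset.mem_insert.mp hi with rfl | hiN
    · have hfN : f N = p := by rw [hf]; simp
      rw [hfN, if_pos rfl]
      apply col_eq_of_inBox
      constructor
      · rw [hpsum' j, if_neg (lt_irrefl j)]; omega
      · rw [hpsum' j, if_neg (lt_irrefl j), hn', Function.update_self]; omega
    · rw [Finset.mem_range] at hiN
      have hiN' : i ≠ N := by omega
      rw [if_neg hiN']
      obtain ⟨l, hl⟩ := exists_inBox (show i < total n from hiN)
      rw [col_eq_of_inBox hl]
      obtain ⟨hl1, hl2⟩ := hl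
      rcases le_or_gt l j with hlj | hlj
      · have hip : i < p := by
          rcases eq_or_lt_of_le hlj with rfl | hlt
          · omega
          · have := psum_add_le_of_lt n hlt
            omega
        have hfi : f i = i := by rw [hf]; simp [hiN', hip]
        rw [hfi]
        apply col_eq_of_inBox
        have hpsl : psum n' l = psum n l := by
          rw [hpsum' l, if_neg (not_lt_of_ge hlj)]
          omega
        have hnl : n l ≤ n' l := by
          rcases eq_or_ne l j with rfl | hne
          · rw [hn', Function.update_self]; omega
          · rw [hn', Function.update_of_ne hne]
        exact ⟨by omega, by omega⟩
      · have hpi : p ≤ i := le_trans (psum_add_le_of_lt n hlj) hl1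
        have hfi : f i = i + 1 := by rw [hf]; simp [hiN']; omega
        rw [hfi]
        apply col_eq_of_inBox
        have hpsl : psum n' l = psum n l + 1 := by rw [hpsum' l, if_pos hlj]
        have hnl : n' l = n l := by
          rw [hn', Function.update_of_ne (ne_of_gt hlj)]
        exact ⟨by omega, by omega⟩
  have hrel := GF_relabel (S := insert N (Finset.range N))
    (c := fun i => if i = N then (j : ℕ) else col n i) (c' := col n') (f := f) hinj hcol a
  rw [himg] at hrel
  exact hrel

lemma charlier_minus (n : Fin m → ℕ) (l : Fin m) {y : ℕ} (hy : inBox n l y) (a : ℝ) :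
    GF ((Finset.range (total n)).erase y) (col n) a
      = charlierGF (Function.update n l (n l - 1)) a := by
  set N := total n with hN
  have hyN : y < N := inBox_lt_total hy
  obtain ⟨hy1, hy2⟩ := hy
  have hnl : 1 ≤ n l := by omega
  set n'' := Function.update n l (n l - 1) with hn''
  have htotu := total_update n l (n l - 1)
  rw [← hn''] at htotu
  have htot : total n'' = N - 1 := by omega
  rw [charlier_eq_GF, htot]
  set f : ℕ → ℕ := fun i => if i < y then i else i - 1 with hf
  have hval : ∀ w ∈ (Finset.range N).erase y,
      (w < y ∧ f w = w) ∨ (y < w ∧ w < N ∧ f w = w - 1) := by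
    intro w hw
    obtain ⟨hwy, hwN⟩ := Finset.mem_erase.mp hw
    rw [Finset.mem_range] at hwN
    by_cases h : w < y
    · exact Or.inl ⟨h, by rw [hf]; simp [h]⟩
    · exact Or.inr ⟨by omega, hwN, by rw [hf]; simp [h]⟩
  have hinj : Set.InjOn f (((Finset.range N).erase y : Finset ℕ) : Set ℕ) := by
    intro u hu v hv huv
    have hu' := hval u (by exact_mod_cast hu)
    have hv' := hval v (by exact_mod_cast hv)
    rcases hu' with ⟨h1, h2⟩ | ⟨h1, h2, h3⟩ <;> rcases hv' with ⟨g1, g2⟩ | ⟨g1, g2, g3⟩ <;> omega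
  have himg : ((Finset.range N).erase y).image f = Finset.range (N - 1) := by
    ext z
    simp only [Finset.mem_image, Finset.mem_range]
    constructor
    · rintro ⟨i, hi, rfl⟩
      rcases hval i hi with ⟨h1, h2⟩ | ⟨h1, h2, h3⟩ <;> omega
    · intro hz
      by_cases h : z < y
      · refine ⟨z, Finset.mem_erase.mpr ⟨by omega, Finset.mem_range.mpr (by omega)⟩, ?_⟩
        rw [hf]; simp [h]
      · refine ⟨z + 1, Finset.mem_erase.mpr ⟨by omega, Finset.mem_range.mpr (by omega)⟩, ?_⟩
        rw [hf]; simp; omega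
  have hpsum'' : ∀ t, psum n'' t + (if l < t then 1 else 0) = psum n t := by
    intro t
    have := psum_update n l (n l - 1) t
    rw [← hn''] at this
    by_cases h : l < t <;> simp only [h, if_true, if_false] at this ⊢ <;> omega
  have hcol : ∀ i ∈ (Finset.range N).erase y, col n'' (f i) = col n i := by
    intro i hi
    obtain ⟨hiy, hiN⟩ := Finset.mem_erase.mp hi
    rw [Finset.mem_range] at hiN
    obtain ⟨l', hl'⟩ := exists_inBox (show i < total n from hiN)
    rw [col_eq_of_inBox hl']
    obtain ⟨hl1, hl2⟩ := hl'
    rcases lt_trichotomy l' l with hc | hc | hc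
    · have hend : psum n l' + n l' ≤ psum n l := psum_add_le_of_lt n hc
      have hiy' : i < y := by omega
      have hfi : f i = i := by rw [hf]; simp [hiy']
      rw [hfi]
      apply col_eq_of_inBox
      have h1 : psum n'' l' = psum n l' := by
        have := hpsum'' l'
        rw [if_neg (by exact fun h => absurd (lt_trans hc h) (lt_irrefl l'))] at this
        omega
      have h2 : n'' l' = n l' := by
        rw [hn'', Function.update_of_ne (ne_of_lt hc)]
      exact ⟨by omega, by omega⟩
    · subst hc
      have h1 : psum n'' l' = psum n l' := by
        have := hpsum'' l'
        rw [if_neg (lt_irrefl l')] at this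
        omega
      have h2 : n'' l' = n l' - 1 := by rw [hn'', Function.update_self]
      by_cases hiy' : i < y
      · have hfi : f i = i := by rw [hf]; simp [hiy']
        rw [hfi]
        apply col_eq_of_inBox
        exact ⟨by omega, by omega⟩
      · have hfi : f i = i - 1 := by rw [hf]; simp [hiy']
        rw [hfi]
        apply col_eq_of_inBox
        exact ⟨by omega, by omega⟩
    · have hend : psum n l + n l ≤ psum n l' := psum_add_le_of_lt n hc
      have hiy' : ¬ i < y := by omega
      have hfi : f i = i - 1 := by rw [hf]; simp [hiy']
      rw [hfi]
      apply col_eq_of_inBox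
      have h1 : psum n'' l' + 1 = psum n l' := by
        have := hpsum'' l'
        rw [if_pos hc] at this
        omega
      have h2 : n'' l' = n l' := by
        rw [hn'', Function.update_of_ne (ne_of_gt hc)]
      exact ⟨by omega, by omega⟩
  rw [← himg]
  exact (GF_relabel hinj hcol a).symm

lemma sum_col_eq (n : Fin m → ℕ) (l : Fin m) (a : ℝ) :
    ∑ y ∈ (Finset.range (total n)).filter (fun y => col n y = (l : ℕ)),
        GF ((Finset.range (total n)).erase y) (col n) a
      = (n l : ℝ) * charlierGF (Function.update n l (n l - 1)) a := by
  have hconst : ∀ y ∈ (Finset.range (total n)).filter (fun y => col n y = (l : ℕ)),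
      GF ((Finset.range (total n)).erase y) (col n) a
        = charlierGF (Function.update n l (n l - 1)) a := by
    intro y hy
    obtain ⟨hyN, hcy⟩ := Finset.mem_filter.mp hy
    rw [Finset.mem_range] at hyN
    exact charlier_minus n l (inBox_of_col hyN hcy) a
  rw [Finset.sum_congr rfl hconst, Finset.sum_const, nsmul_eq_mul, card_filter_col_eq]

/-- The one-variable recurrence. -/
lemma charlier_key (n : Fin m → ℕ) (l : Fin m) (a : ℝ) :
    charlierGF (Function.update n l (n l + 1)) a
      = (∑ P ∈ parts (Finset.range (total n)) (col n), (P.card : ℝ) * a ^ P.card)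
        - (n l : ℝ) * charlierGF n a
        + a * (∑ y ∈ Finset.range (total n),
            GF ((Finset.range (total n)).erase y) (col n) a)
        - a * (n l : ℝ) * charlierGF (Function.update n l (n l - 1)) a := by
  set N := total n with hN
  set S := Finset.range N with hS
  have hxS : N ∉ S := by rw [hS]; exact Finset.notMem_range_self
  set c : ℕ → ℕ := fun i => if i = N then (l : ℕ) else col n i with hc
  have hcS : ∀ i ∈ S, c i = col n i := by
    intro i hi
    rw [hS, Finset.mem_range] at hi
    rw [hc]
    simp only []
    rw [if_neg (by omega)]
  have hcN : c N = (l : ℕ) := by rw [hc]; simp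
  rw [charlier_plus n l a, GF_insert hxS a]
  have hparts : parts S c = parts S (col n) := parts_congr hcS
  have hfilter1 : S.filter (fun y => c y = c N) = S.filter (fun y => col n y = (l : ℕ)) := by
    apply Finset.filter_congr
    intro y hy
    rw [hcS y hy, hcN]
  have hfilter2 : S.filter (fun y => c y ≠ c N)
      = S.filter (fun y => ¬ col n y = (l : ℕ)) := by
    apply Finset.filter_congr
    intro y hy
    rw [hcS y hy, hcN]
  have hGFer : ∀ y ∈ S.filter (fun y => ¬ col n y = (l : ℕ)),
      GF (S.erase y) c a = GF (S.erase y) (col n) a := by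
    intro y _
    apply GF_congr
    intro i hi
    exact hcS i (Finset.mem_of_mem_erase hi)
  rw [hparts, hfilter1, hfilter2, Finset.sum_congr rfl hGFer, card_filter_col_eq]
  have hsplit := Finset.sum_filter_add_sum_filter_not S (fun y => col n y = (l : ℕ))
    (fun y => GF (S.erase y) (col n) a)
  have hsum_eq := sum_col_eq n l a
  have hsub : ∑ P ∈ parts S (col n), ((P.card : ℝ) - (n l : ℝ)) * a ^ P.card
      = (∑ P ∈ parts S (col n), (P.card : ℝ) * a ^ P.card)
        - (n l : ℝ) * charlierGF n a := by
    rw [charlier_eq_GF, GF, Finset.mul_sum, ← Finset.sum_sub_distrib]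
    apply Finset.sum_congr rfl
    intro P _
    ring
  rw [hsub]
  have h2 : ∑ y ∈ S.filter (fun y => ¬ col n y = (l : ℕ)), GF (S.erase y) (col n) a
      = (∑ y ∈ S, GF (S.erase y) (col n) a)
        - (n l : ℝ) * charlierGF (Function.update n l (n l - 1)) a := by
    rw [← hsplit, ← hsum_eq]
    ring
  rw [h2]
  ring

end Bridges

/-- the difference system satisfied by the generating polynomials of
inhomogeneous set partitions counted by number of blocks. -/
theorem charlier_difference_system {m : ℕ} (n : Fin m → ℕ) (j k : Fin m) (hjk : j ≠ k)
    (a : ℝ) :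
    charlierGF (Function.update n j (n j + 1)) a
        - charlierGF (Function.update n k (n k + 1)) a
      = ((n k : ℝ) - (n j : ℝ)) * charlierGF n a
        + a * (n k : ℝ) * charlierGF (Function.update n k (n k - 1)) a
        - a * (n j : ℝ) * charlierGF (Function.update n j (n j - 1)) a := by
  rw [charlier_key n j a, charlier_key n k a]
  ring

end Paper
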